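/- On the Heisenberg group H = ℂⁿ × ℝ with coordinates (z,t), let ρ = (|z|⁴ + t²)^{1/4} be the Heisenberg norm and Z_α = ∂/∂z^α + i z̄^α ∂/∂t. Then the function u = log ρ satisfies: ∑_α (Z_α Z̄_α + Z̄_α Z_α)(log ρ) − 2n ∑_α |Z_α log ρ|² = (n/2)·|z|²/ρ⁴, where Z̄_α = ∂/∂z̄^α − i z^α ∂/∂t. Consequently the Tanaka–Webster scalar curvature of the contact form θ = ρ^{-2}θ₀ equals R = n(n+1)|z|²/(2ρ²), which is nonnegative and vanishes exactly on the set z = 0. -/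

import Mathlib

open scoped BigOperators ComplexConjugate

/-- Wirtinger derivative `∂/∂z^α` on the Heisenberg group `ℂⁿ × ℝ`. -/
noncomputable def wdz {n : ℕ} (a : Fin n) (f : ((Fin n → ℂ) × ℝ) → ℂ)
    (p : (Fin n → ℂ) × ℝ) : ℂ :=
  (1 / 2) * (fderiv ℝ f p (Pi.single a 1, 0)
    - Complex.I * fderiv ℝ f p (Pi.single a Complex.I, 0))

/-- Wirtinger derivative `∂/∂z̄^α` on the Heisenberg group `ℂⁿ × ℝ`. -/
noncomputable def wdzbar {n : ℕ} (a : Fin n) (f : ((Fin n → ℂ) × ℝ) → ℂ)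
    (p : (Fin n → ℂ) × ℝ) : ℂ :=
  (1 / 2) * (fderiv ℝ f p (Pi.single a 1, 0)
    + Complex.I * fderiv ℝ f p (Pi.single a Complex.I, 0))

/-- Derivative `∂/∂t` on the Heisenberg group `ℂⁿ × ℝ`. -/
noncomputable def wdt {n : ℕ} (f : ((Fin n → ℂ) × ℝ) → ℂ)
    (p : (Fin n → ℂ) × ℝ) : ℂ :=
  fderiv ℝ f p (0, 1)

/-- The CR vector field `Z_α = ∂/∂z^α + i z̄^α ∂/∂t`. -/
noncomputable def Zop {n : ℕ} (a : Fin n) (f : ((Fin n → ℂ) × ℝ) → ℂ)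
    (p : (Fin n → ℂ) × ℝ) : ℂ :=
  wdz a f p + Complex.I * conj (p.1 a) * wdt f p

/-- The conjugate CR vector field `Z̄_α = ∂/∂z̄^α − i z^α ∂/∂t`. -/
noncomputable def Zbarop {n : ℕ} (a : Fin n) (f : ((Fin n → ℂ) × ℝ) → ℂ)
    (p : (Fin n → ℂ) × ℝ) : ℂ :=
  wdzbar a f p - Complex.I * (p.1 a) * wdt f p

/-- The Heisenberg norm `ρ = (|z|⁴ + t²)^{1/4}`. -/
noncomputable def heisRho {n : ℕ} (p : (Fin n → ℂ) × ℝ) : ℝ :=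
  ((∑ a, Complex.normSq (p.1 a)) ^ 2 + p.2 ^ 2) ^ ((1 : ℝ) / 4)

/-- `u = log ρ` (as a complex-valued function). -/
noncomputable def heisU {n : ℕ} (p : (Fin n → ℂ) × ℝ) : ℂ :=
  (Real.log (heisRho p) : ℂ)

namespace Stmt16Aux
open Complex

lemma Ipow3 : Complex.I ^ 3 = -Complex.I := by rw [pow_succ, Complex.I_sq]; ring
lemma Ipow4 : Complex.I ^ 4 = 1 := by rw [pow_succ, Ipow3]; simp [Complex.I_mul_I]
lemma Ipow5 : Complex.I ^ 5 = Complex.I := by rw [pow_succ, Ipow4]; ring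
lemma Ipow6 : Complex.I ^ 6 = -1 := by rw [pow_succ, Ipow5, Complex.I_mul_I]
lemma Ipow7 : Complex.I ^ 7 = -Complex.I := by rw [pow_succ, Ipow6]; ring
lemma Ipow8 : Complex.I ^ 8 = 1 := by rw [pow_succ, Ipow7]; simp [Complex.I_mul_I]

variable {n : ℕ}

noncomputable def sfun (z : Fin n → ℂ) : ℝ := ∑ a, Complex.normSq (z a)
noncomputable def phi (p : (Fin n → ℂ) × ℝ) : ℝ := (sfun p.1) ^ 2 + p.2 ^ 2
noncomputable def FF (p : (Fin n → ℂ) × ℝ) : ℂ := ((1/4 : ℝ) * Real.log (phi p) : ℝ)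
noncomputable def denm (p : (Fin n → ℂ) × ℝ) : ℂ := 2 * ((sfun p.1 : ℂ) - Complex.I * p.2)
noncomputable def denp (p : (Fin n → ℂ) × ℝ) : ℂ := 2 * ((sfun p.1 : ℂ) + Complex.I * p.2)
noncomputable def Gd (a : Fin n) (p : (Fin n → ℂ) × ℝ) : ℂ := conj (p.1 a) / denm p
noncomputable def Gb (a : Fin n) (p : (Fin n → ℂ) × ℝ) : ℂ := (p.1 a) / denp p

lemma dre : Differentiable ℝ Complex.re := Complex.reCLM.differentiable
lemma dim : Differentiable ℝ Complex.im := Complex.imCLM.differentiable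
lemma dconj : Differentiable ℝ (conj : ℂ → ℂ) := Complex.conjCLE.differentiable
lemma dofReal : Differentiable ℝ (Complex.ofReal : ℝ → ℂ) := Complex.ofRealCLM.differentiable
attribute [fun_prop] dre dim dconj dofReal

lemma diff_normSq : Differentiable ℝ Complex.normSq := by
  have h : ⇑Complex.normSq = fun z : ℂ => z.re * z.re + z.im * z.im :=
    funext fun z => Complex.normSq_apply z
  rw [h]; fun_prop

attribute [fun_prop] diff_normSq

lemma diff_sfun : Differentiable ℝ (fun p : (Fin n → ℂ) × ℝ => sfun p.1) := by
  unfold sfun; fun_prop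

lemma diff_phi : Differentiable ℝ (phi (n := n)) := by
  have := diff_sfun (n := n)
  unfold phi; fun_prop

lemma diff_denm : Differentiable ℝ (denm (n := n)) := by
  have h1 : Differentiable ℝ (fun p : (Fin n → ℂ) × ℝ => ((sfun p.1 : ℝ) : ℂ)) :=
    dofReal.comp diff_sfun
  have h2 : Differentiable ℝ (fun p : (Fin n → ℂ) × ℝ => Complex.I * ((p.2 : ℝ) : ℂ)) :=
    (dofReal.comp differentiable_snd).const_mul Complex.I
  exact ((h1.sub h2).const_mul 2 : _)

lemma diff_denp : Differentiable ℝ (denp (n := n)) := by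
  have h1 : Differentiable ℝ (fun p : (Fin n → ℂ) × ℝ => ((sfun p.1 : ℝ) : ℂ)) :=
    dofReal.comp diff_sfun
  have h2 : Differentiable ℝ (fun p : (Fin n → ℂ) × ℝ => Complex.I * ((p.2 : ℝ) : ℂ)) :=
    (dofReal.comp differentiable_snd).const_mul Complex.I
  exact ((h1.add h2).const_mul 2 : _)

lemma sfun_nonneg (z : Fin n → ℂ) : 0 ≤ sfun z :=
  Finset.sum_nonneg fun a _ => Complex.normSq_nonneg _

lemma sfun_eq_zero_iff (z : Fin n → ℂ) : sfun z = 0 ↔ z = 0 := by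
  rw [sfun, Finset.sum_eq_zero_iff_of_nonneg fun a _ => Complex.normSq_nonneg _]
  constructor
  · intro h; funext a
    simpa using Complex.normSq_eq_zero.mp (h a (Finset.mem_univ a))
  · intro h a _; simp [h]

lemma phi_nonneg (p : (Fin n → ℂ) × ℝ) : 0 ≤ phi p := by
  unfold phi; positivity

lemma phi_pos {p : (Fin n → ℂ) × ℝ} (hp : p ≠ 0) : 0 < phi p := by
  rcases lt_or_eq_of_le (phi_nonneg p) with h | h
  · exact h
  exfalso
  unfold phi at h
  have hs : sfun p.1 = 0 := by nlinarith [sq_nonneg (sfun p.1), sq_nonneg p.2]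
  have ht : p.2 = 0 := by nlinarith [sq_nonneg (sfun p.1), sq_nonneg p.2]
  exact hp (Prod.ext ((sfun_eq_zero_iff p.1).mp hs) ht)

lemma denm_ne {p : (Fin n → ℂ) × ℝ} (hp : p ≠ 0) : denm p ≠ 0 := by
  intro h
  unfold denm at h
  rw [Complex.ext_iff] at h
  simp at h
  exact (phi_pos hp).ne' (by unfold phi; rw [h.1, h.2]; ring)

lemma denp_ne {p : (Fin n → ℂ) × ℝ} (hp : p ≠ 0) : denp p ≠ 0 := by
  intro h
  unfold denp at h
  rw [Complex.ext_iff] at h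
  simp at h
  exact (phi_pos hp).ne' (by unfold phi; rw [h.1, h.2]; ring)

lemma conj_denm (p : (Fin n → ℂ) × ℝ) : conj (denm p) = denp p := by
  unfold denm denp
  simp [map_mul, map_sub, Complex.conj_ofReal, map_ofNat]

lemma normSq_add_real_smul (z c : ℂ) (r : ℝ) :
    Complex.normSq (z + r • c)
      = Complex.normSq z + 2 * ((conj z) * c).re * r + Complex.normSq c * r ^ 2 := by
  simp [Complex.normSq_apply, Complex.real_smul, Complex.add_re, Complex.add_im,
    Complex.mul_re, Complex.mul_im, Complex.ofReal_re, Complex.ofReal_im,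
    Complex.conj_re, Complex.conj_im]
  ring

lemma sfun_line (z : Fin n → ℂ) (a : Fin n) (c : ℂ) (r : ℝ) :
    sfun (z + r • (Pi.single a c : Fin n → ℂ))
      = sfun z + 2 * ((conj (z a)) * c).re * r + Complex.normSq c * r ^ 2 := by
  unfold sfun
  have h : ∀ b, Complex.normSq ((z + r • (Pi.single a c : Fin n → ℂ)) b)
      = Complex.normSq (z b)
        + (2 * ((conj (z b)) * ((Pi.single a c : Fin n → ℂ) b)).re * r
            + Complex.normSq ((Pi.single a c : Fin n → ℂ) b) * r ^ 2) := by
    intro b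
    have := normSq_add_real_smul (z b) ((Pi.single a c : Fin n → ℂ) b) r
    simp only [Pi.add_apply, Pi.smul_apply] at *
    linarith [this]
  rw [Finset.sum_congr rfl fun b _ => h b, Finset.sum_add_distrib]
  have h2 : ∑ b, (2 * ((conj (z b)) * ((Pi.single a c : Fin n → ℂ) b)).re * r
      + Complex.normSq ((Pi.single a c : Fin n → ℂ) b) * r ^ 2)
      = 2 * ((conj (z a)) * c).re * r + Complex.normSq c * r ^ 2 := by
    rw [Finset.sum_eq_single_of_mem a (Finset.mem_univ a)]
    · simp
    · intro b _ hb
      simp [Pi.single_eq_of_ne hb]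
  rw [h2, ← add_assoc]

lemma line_z (q : (Fin n → ℂ) × ℝ) (a : Fin n) (c : ℂ) (r : ℝ) :
    q + r • ((Pi.single a c, 0) : (Fin n → ℂ) × ℝ) = (q.1 + r • (Pi.single a c : Fin n → ℂ), q.2) := by
  simp [Prod.ext_iff]

lemma line_t (q : (Fin n → ℂ) × ℝ) (r : ℝ) :
    q + r • ((0, 1) : (Fin n → ℂ) × ℝ) = (q.1, q.2 + r) := by
  simp [Prod.ext_iff]

lemma phi_line_z (q : (Fin n → ℂ) × ℝ) (a : Fin n) (c : ℂ) (r : ℝ) :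
    phi (q + r • ((Pi.single a c, 0) : (Fin n → ℂ) × ℝ))
      = (sfun q.1 + 2 * ((conj (q.1 a)) * c).re * r + Complex.normSq c * r ^ 2) ^ 2
          + q.2 ^ 2 := by
  rw [line_z]; unfold phi; rw [sfun_line]

lemma phi_line_t (q : (Fin n → ℂ) × ℝ) (r : ℝ) :
    phi (q + r • ((0, 1) : (Fin n → ℂ) × ℝ)) = (sfun q.1) ^ 2 + (q.2 + r) ^ 2 := by
  rw [line_t]; simp [phi]

lemma fderiv_line {f : ((Fin n → ℂ) × ℝ) → ℂ} {p v : (Fin n → ℂ) × ℝ}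
    (hf : DifferentiableAt ℝ f p) {c : ℂ}
    (h : HasDerivAt (fun r : ℝ => f (p + r • v)) c 0) : fderiv ℝ f p v = c := by
  have hline : HasDerivAt (fun r : ℝ => p + r • v) v 0 := by
    simpa using ((hasDerivAt_id (0:ℝ)).smul_const v).const_add p
  have h2 : HasDerivAt (fun r : ℝ => f (p + r • v)) (fderiv ℝ f p v) 0 :=
    hf.hasFDerivAt.comp_hasDerivAt_of_eq (0:ℝ) hline (by simp)
  exact h2.unique h

lemma heisU_eq : (heisU : ((Fin n → ℂ) × ℝ) → ℂ) = FF := by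
  funext p
  unfold heisU heisRho FF
  rw [show ((∑ a, Complex.normSq (p.1 a)) ^ 2 + p.2 ^ 2) = phi p from rfl]
  rcases eq_or_lt_of_le (phi_nonneg p) with h | h
  · rw [← h, Real.zero_rpow (by norm_num)]
    simp
  · rw [Real.log_rpow h]

lemma diff_FF {q : (Fin n → ℂ) × ℝ} (hq : q ≠ 0) : DifferentiableAt ℝ FF q := by
  have h1 : DifferentiableAt ℝ (fun p : (Fin n → ℂ) × ℝ => Real.log (phi p)) q :=
    (Real.differentiableAt_log (phi_pos hq).ne').comp q (diff_phi q)
  exact Complex.ofRealCLM.differentiable.differentiableAt.comp q (h1.const_mul (1/4 : ℝ))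

lemma hasDerivAt_poly (s B D : ℝ) : HasDerivAt (fun r : ℝ => s + B * r + D * r ^ 2) B 0 := by
  have h1 : HasDerivAt (fun r : ℝ => B * r) B 0 := by
    simpa using (hasDerivAt_id (0:ℝ)).const_mul B
  have h2 : HasDerivAt (fun r : ℝ => D * r ^ 2) 0 0 := by
    simpa using (hasDerivAt_pow 2 (0:ℝ)).const_mul D
  have h3 := (h1.add h2).const_add s
  simpa [← add_assoc] using h3

lemma FF_deriv_z {q : (Fin n → ℂ) × ℝ} (hq : q ≠ 0) (a : Fin n) (c : ℂ) :
    fderiv ℝ FF q ((Pi.single a c : Fin n → ℂ), (0:ℝ))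
      = ((sfun q.1 * ((conj (q.1 a)) * c).re / phi q : ℝ) : ℂ) := by
  apply fderiv_line (diff_FF hq)
  set s := sfun q.1
  set B := 2 * ((conj (q.1 a)) * c).re with hB
  set D := Complex.normSq c
  have hfun : (fun r : ℝ => FF (q + r • ((Pi.single a c, 0) : (Fin n → ℂ) × ℝ)))
      = fun r : ℝ => (((1/4 : ℝ) * Real.log ((s + B * r + D * r ^ 2) ^ 2 + q.2 ^ 2) : ℝ) : ℂ) := by
    funext r; unfold FF; rw [phi_line_z]
  rw [hfun]
  have hg0 : (s + B * 0 + D * 0 ^ 2) ^ 2 + q.2 ^ 2 ≠ 0 := by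
    have := (phi_pos hq).ne'
    simpa [phi] using this
  have h1 : HasDerivAt (fun r : ℝ => (s + B * r + D * r ^ 2) ^ 2 + q.2 ^ 2) (2 * s * B) 0 := by
    have := ((hasDerivAt_poly s B D).pow 2).add_const (q.2 ^ 2)
    norm_num at this ⊢
    exact this
  have h2 := (Real.hasDerivAt_log hg0).comp 0 h1
  have h3 := (h2.const_mul (1/4 : ℝ)).ofReal_comp
  have hval : (1/4 : ℝ) * (((s + B * 0 + D * 0 ^ 2) ^ 2 + q.2 ^ 2)⁻¹ * (2 * s * B))
      = s * ((conj (q.1 a)) * c).re / phi q := by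
    have hphi : phi q = s ^ 2 + q.2 ^ 2 := rfl
    have hphine : s ^ 2 + q.2 ^ 2 ≠ 0 := by rw [← hphi]; exact (phi_pos hq).ne'
    rw [hB, hphi]
    simp only [mul_zero, add_zero, ne_eq, OfNat.ofNat_ne_zero, not_false_eq_true, zero_pow]
    field_simp
    ring
  rw [hval] at h3
  exact h3

lemma FF_deriv_t {q : (Fin n → ℂ) × ℝ} (hq : q ≠ 0) :
    fderiv ℝ FF q ((0 : Fin n → ℂ), (1:ℝ)) = ((q.2 / (2 * phi q) : ℝ) : ℂ) := by
  apply fderiv_line (diff_FF hq)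
  set s := sfun q.1
  have hfun : (fun r : ℝ => FF (q + r • ((0, 1) : (Fin n → ℂ) × ℝ)))
      = fun r : ℝ => (((1/4 : ℝ) * Real.log (s ^ 2 + (q.2 + r) ^ 2) : ℝ) : ℂ) := by
    funext r; unfold FF; rw [phi_line_t]
  rw [hfun]
  have hg0 : s ^ 2 + (q.2 + 0) ^ 2 ≠ 0 := by
    have := (phi_pos hq).ne'
    simpa [phi] using this
  have h1 : HasDerivAt (fun r : ℝ => s ^ 2 + (q.2 + r) ^ 2) (2 * q.2) 0 := by
    have := (((hasDerivAt_id (0:ℝ)).const_add q.2).pow 2).const_add (s ^ 2)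
    norm_num at this ⊢
    exact this
  have h2 := (Real.hasDerivAt_log hg0).comp 0 h1
  have h3 := (h2.const_mul (1/4 : ℝ)).ofReal_comp
  have hval : (1/4 : ℝ) * ((s ^ 2 + (q.2 + 0) ^ 2)⁻¹ * (2 * q.2)) = q.2 / (2 * phi q) := by
    have hphi : phi q = s ^ 2 + q.2 ^ 2 := rfl
    have hphine : s ^ 2 + q.2 ^ 2 ≠ 0 := by rw [← hphi]; exact (phi_pos hq).ne'
    rw [hphi]
    field_simp
    ring
  rw [hval] at h3
  exact h3

lemma Zop_heisU {q : (Fin n → ℂ) × ℝ} (hq : q ≠ 0) (a : Fin n) :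
    Zop a heisU q = Gd a q := by
  unfold Zop wdz wdt
  rw [heisU_eq, FF_deriv_z hq a 1, FF_deriv_z hq a Complex.I, FF_deriv_t hq]
  unfold Gd denm
  set x := (q.1 a).re with hx
  set y := (q.1 a).im with hy
  set s := sfun q.1
  set t := q.2
  have hconj : conj (q.1 a) = (x : ℂ) - (y : ℂ) * Complex.I := by
    apply Complex.ext <;> simp [hx, hy]
  have h1 : ((conj (q.1 a)) * 1).re = x := by simp [hconj]
  have h2 : ((conj (q.1 a)) * Complex.I).re = y := by
    simp [hconj, Complex.add_re, Complex.mul_re]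
  rw [h1, h2, hconj]
  have hphic : ((phi q : ℝ) : ℂ) = (s : ℂ) ^ 2 + (t : ℂ) ^ 2 := by
    unfold phi; push_cast; ring
  have hphine : ((s : ℂ) ^ 2 + (t : ℂ) ^ 2) ≠ 0 := by
    rw [← hphic]
    exact_mod_cast Complex.ofReal_ne_zero.mpr (phi_pos hq).ne'
  have hdne : (2 : ℂ) * ((s : ℂ) - Complex.I * (t : ℂ)) ≠ 0 := by
    have := denm_ne hq
    unfold denm at this
    exact this
  have hone : ((s : ℂ) - Complex.I * (t : ℂ)) ≠ 0 := fun h => hdne (by rw [h, mul_zero])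
  push_cast [hphic]
  field_simp
  rw [eq_div_iff (by rw [mul_comm]; exact hone)]
  ring_nf
  simp only [Complex.I_sq, Ipow3, Ipow4, Ipow5, Ipow6, Ipow7, Ipow8]
  ring_nf

lemma Zbarop_heisU {q : (Fin n → ℂ) × ℝ} (hq : q ≠ 0) (a : Fin n) :
    Zbarop a heisU q = Gb a q := by
  unfold Zbarop wdzbar wdt
  rw [heisU_eq, FF_deriv_z hq a 1, FF_deriv_z hq a Complex.I, FF_deriv_t hq]
  unfold Gb denp
  set x := (q.1 a).re with hx
  set y := (q.1 a).im with hy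
  set s := sfun q.1
  set t := q.2
  have hconj : conj (q.1 a) = (x : ℂ) - (y : ℂ) * Complex.I := by
    apply Complex.ext <;> simp [hx, hy]
  have hz : (q.1 a) = (x : ℂ) + (y : ℂ) * Complex.I := (Complex.re_add_im (q.1 a)).symm
  have h1 : ((conj (q.1 a)) * 1).re = x := by simp [hconj]
  have h2 : ((conj (q.1 a)) * Complex.I).re = y := by
    simp [hconj, Complex.add_re, Complex.mul_re]
  rw [h1, h2, hz]
  have hphic : ((phi q : ℝ) : ℂ) = (s : ℂ) ^ 2 + (t : ℂ) ^ 2 := by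
    unfold phi; push_cast; ring
  have hphine : ((s : ℂ) ^ 2 + (t : ℂ) ^ 2) ≠ 0 := by
    rw [← hphic]
    exact_mod_cast Complex.ofReal_ne_zero.mpr (phi_pos hq).ne'
  have hdne : (2 : ℂ) * ((s : ℂ) + Complex.I * (t : ℂ)) ≠ 0 := by
    have := denp_ne hq
    unfold denp at this
    exact this
  have hone : ((s : ℂ) + Complex.I * (t : ℂ)) ≠ 0 := fun h => hdne (by rw [h, mul_zero])
  push_cast [hphic]
  field_simp
  rw [eq_div_iff (by rw [mul_comm]; exact hone)]
  ring_nf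
  simp only [Complex.I_sq, Ipow3, Ipow4, Ipow5, Ipow6, Ipow7, Ipow8]
  ring_nf


lemma diff_Gd {p : (Fin n → ℂ) × ℝ} (hp : p ≠ 0) (a : Fin n) :
    DifferentiableAt ℝ (Gd a) p := by
  have hnum : DifferentiableAt ℝ (fun p : (Fin n → ℂ) × ℝ => conj (p.1 a)) p := by fun_prop
  unfold Gd
  simp only [div_eq_mul_inv]
  exact hnum.mul (DifferentiableAt.inv (diff_denm p) (denm_ne hp))

lemma diff_Gb {p : (Fin n → ℂ) × ℝ} (hp : p ≠ 0) (a : Fin n) :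
    DifferentiableAt ℝ (Gb a) p := by
  have hnum : DifferentiableAt ℝ (fun p : (Fin n → ℂ) × ℝ => p.1 a) p := by fun_prop
  unfold Gb
  simp only [div_eq_mul_inv]
  exact hnum.mul (DifferentiableAt.inv (diff_denp p) (denp_ne hp))

lemma hasDerivAt_ofReal_line (u : ℝ) : HasDerivAt (fun r : ℝ => ((u + r : ℝ) : ℂ)) 1 0 := by
  have := ((hasDerivAt_id (0:ℝ)).const_add u).ofReal_comp
  simpa using this

lemma hasDerivAt_polyC (s B D : ℝ) :
    HasDerivAt (fun r : ℝ => ((s + B * r + D * r ^ 2 : ℝ) : ℂ)) (B : ℂ) 0 :=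
  (hasDerivAt_poly s B D).ofReal_comp

lemma Gd_deriv_z {q : (Fin n → ℂ) × ℝ} (hq : q ≠ 0) (a : Fin n) (c : ℂ) :
    fderiv ℝ (Gd a) q ((Pi.single a c : Fin n → ℂ), (0:ℝ))
      = (conj c * denm q - conj (q.1 a) * (2 * ((2 * ((conj (q.1 a)) * c).re : ℝ) : ℂ)))
          / (denm q) ^ 2 := by
  apply fderiv_line (diff_Gd hq a)
  set s := sfun q.1 with hs
  set B := 2 * ((conj (q.1 a)) * c).re with hB
  set D := Complex.normSq c with hD
  have hfun : (fun r : ℝ => Gd a (q + r • ((Pi.single a c, 0) : (Fin n → ℂ) × ℝ)))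
      = fun r : ℝ => (conj (q.1 a) + (r : ℂ) * conj c)
          / (2 * (((s + B * r + D * r ^ 2 : ℝ) : ℂ) - Complex.I * (q.2 : ℂ))) := by
    funext r
    unfold Gd denm
    rw [line_z]
    simp only [Pi.add_apply, Pi.smul_apply, Pi.single_eq_same]
    rw [sfun_line]
    simp [Complex.real_smul, map_add, map_mul, Complex.conj_ofReal, hB, hD, hs]
  rw [hfun]
  have hnum : HasDerivAt (fun r : ℝ => conj (q.1 a) + (r : ℂ) * conj c) (conj c) 0 := by
    have h1 : HasDerivAt (fun r : ℝ => ((r : ℝ) : ℂ)) 1 0 := by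
      simpa using (hasDerivAt_ofReal_line 0)
    simpa using (h1.mul_const (conj c)).const_add (conj (q.1 a))
  have hden : HasDerivAt
      (fun r : ℝ => 2 * (((s + B * r + D * r ^ 2 : ℝ) : ℂ) - Complex.I * (q.2 : ℂ)))
      (2 * (B : ℂ)) 0 :=
    ((hasDerivAt_polyC s B D).sub_const (Complex.I * (q.2 : ℂ))).const_mul 2
  have hd0 : 2 * (((s + B * 0 + D * 0 ^ 2 : ℝ) : ℂ) - Complex.I * (q.2 : ℂ)) = denm q := by
    unfold denm; norm_num [hs]
  have hdiv := hnum.div hden (by rw [hd0]; exact denm_ne hq)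
  have : (conj c * (2 * (((s + B * 0 + D * 0 ^ 2 : ℝ) : ℂ) - Complex.I * (q.2 : ℂ)))
        - (conj (q.1 a) + ((0 : ℝ) : ℂ) * conj c) * (2 * (B : ℂ)))
        / (2 * (((s + B * 0 + D * 0 ^ 2 : ℝ) : ℂ) - Complex.I * (q.2 : ℂ))) ^ 2
      = (conj c * denm q - conj (q.1 a) * (2 * ((B : ℝ) : ℂ))) / (denm q) ^ 2 := by
    rw [hd0]; norm_num
  rw [this] at hdiv
  exact hdiv

lemma Gb_deriv_z {q : (Fin n → ℂ) × ℝ} (hq : q ≠ 0) (a : Fin n) (c : ℂ) :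
    fderiv ℝ (Gb a) q ((Pi.single a c : Fin n → ℂ), (0:ℝ))
      = (c * denp q - (q.1 a) * (2 * ((2 * ((conj (q.1 a)) * c).re : ℝ) : ℂ)))
          / (denp q) ^ 2 := by
  apply fderiv_line (diff_Gb hq a)
  set s := sfun q.1 with hs
  set B := 2 * ((conj (q.1 a)) * c).re with hB
  set D := Complex.normSq c with hD
  have hfun : (fun r : ℝ => Gb a (q + r • ((Pi.single a c, 0) : (Fin n → ℂ) × ℝ)))
      = fun r : ℝ => ((q.1 a) + (r : ℂ) * c)
          / (2 * (((s + B * r + D * r ^ 2 : ℝ) : ℂ) + Complex.I * (q.2 : ℂ))) := by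
    funext r
    unfold Gb denp
    rw [line_z]
    simp only [Pi.add_apply, Pi.smul_apply, Pi.single_eq_same]
    rw [sfun_line]
    simp [Complex.real_smul, hB, hD, hs]
  rw [hfun]
  have hnum : HasDerivAt (fun r : ℝ => (q.1 a) + (r : ℂ) * c) c 0 := by
    have h1 : HasDerivAt (fun r : ℝ => ((r : ℝ) : ℂ)) 1 0 := by
      simpa using (hasDerivAt_ofReal_line 0)
    simpa using (h1.mul_const c).const_add (q.1 a)
  have hden : HasDerivAt
      (fun r : ℝ => 2 * (((s + B * r + D * r ^ 2 : ℝ) : ℂ) + Complex.I * (q.2 : ℂ)))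
      (2 * (B : ℂ)) 0 :=
    ((hasDerivAt_polyC s B D).add_const (Complex.I * (q.2 : ℂ))).const_mul 2
  have hd0 : 2 * (((s + B * 0 + D * 0 ^ 2 : ℝ) : ℂ) + Complex.I * (q.2 : ℂ)) = denp q := by
    unfold denp; norm_num [hs]
  have hdiv := hnum.div hden (by rw [hd0]; exact denp_ne hq)
  have : (c * (2 * (((s + B * 0 + D * 0 ^ 2 : ℝ) : ℂ) + Complex.I * (q.2 : ℂ)))
        - ((q.1 a) + ((0 : ℝ) : ℂ) * c) * (2 * (B : ℂ)))
        / (2 * (((s + B * 0 + D * 0 ^ 2 : ℝ) : ℂ) + Complex.I * (q.2 : ℂ))) ^ 2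
      = (c * denp q - (q.1 a) * (2 * ((B : ℝ) : ℂ))) / (denp q) ^ 2 := by
    rw [hd0]; norm_num
  rw [this] at hdiv
  exact hdiv

lemma Gd_deriv_t {q : (Fin n → ℂ) × ℝ} (hq : q ≠ 0) (a : Fin n) :
    fderiv ℝ (Gd a) q ((0 : Fin n → ℂ), (1:ℝ))
      = 2 * Complex.I * conj (q.1 a) / (denm q) ^ 2 := by
  apply fderiv_line (diff_Gd hq a)
  set s := sfun q.1 with hs
  have hfun : (fun r : ℝ => Gd a (q + r • ((0, 1) : (Fin n → ℂ) × ℝ)))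
      = fun r : ℝ => conj (q.1 a)
          / (2 * (((s : ℝ) : ℂ) - Complex.I * ((q.2 + r : ℝ) : ℂ))) := by
    funext r
    unfold Gd denm
    rw [line_t]
  rw [hfun]
  have hnum : HasDerivAt (fun _ : ℝ => conj (q.1 a)) (0 : ℂ) 0 := hasDerivAt_const 0 _
  have hden : HasDerivAt
      (fun r : ℝ => 2 * (((s : ℝ) : ℂ) - Complex.I * ((q.2 + r : ℝ) : ℂ)))
      (2 * (0 - Complex.I * 1)) 0 :=
    ((hasDerivAt_const 0 ((s : ℝ) : ℂ)).sub ((hasDerivAt_ofReal_line q.2).const_mul Complex.I)).const_mul 2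
  have hd0 : 2 * (((s : ℝ) : ℂ) - Complex.I * ((q.2 + 0 : ℝ) : ℂ)) = denm q := by
    unfold denm; norm_num [hs]
  have hdiv := hnum.div hden (by rw [hd0]; exact denm_ne hq)
  have : (0 * (2 * (((s : ℝ) : ℂ) - Complex.I * ((q.2 + 0 : ℝ) : ℂ)))
        - conj (q.1 a) * (2 * (0 - Complex.I * 1)))
        / (2 * (((s : ℝ) : ℂ) - Complex.I * ((q.2 + 0 : ℝ) : ℂ))) ^ 2
      = 2 * Complex.I * conj (q.1 a) / (denm q) ^ 2 := by
    rw [hd0]; ring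
  rw [this] at hdiv
  exact hdiv

lemma Gb_deriv_t {q : (Fin n → ℂ) × ℝ} (hq : q ≠ 0) (a : Fin n) :
    fderiv ℝ (Gb a) q ((0 : Fin n → ℂ), (1:ℝ))
      = -(2 * Complex.I * (q.1 a)) / (denp q) ^ 2 := by
  apply fderiv_line (diff_Gb hq a)
  set s := sfun q.1 with hs
  have hfun : (fun r : ℝ => Gb a (q + r • ((0, 1) : (Fin n → ℂ) × ℝ)))
      = fun r : ℝ => (q.1 a)
          / (2 * (((s : ℝ) : ℂ) + Complex.I * ((q.2 + r : ℝ) : ℂ))) := by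
    funext r
    unfold Gb denp
    rw [line_t]
  rw [hfun]
  have hnum : HasDerivAt (fun _ : ℝ => (q.1 a)) (0 : ℂ) 0 := hasDerivAt_const 0 _
  have hden : HasDerivAt
      (fun r : ℝ => 2 * (((s : ℝ) : ℂ) + Complex.I * ((q.2 + r : ℝ) : ℂ)))
      (2 * (0 + Complex.I * 1)) 0 :=
    ((hasDerivAt_const 0 ((s : ℝ) : ℂ)).add ((hasDerivAt_ofReal_line q.2).const_mul Complex.I)).const_mul 2
  have hd0 : 2 * (((s : ℝ) : ℂ) + Complex.I * ((q.2 + 0 : ℝ) : ℂ)) = denp q := by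
    unfold denp; norm_num [hs]
  have hdiv := hnum.div hden (by rw [hd0]; exact denp_ne hq)
  have : (0 * (2 * (((s : ℝ) : ℂ) + Complex.I * ((q.2 + 0 : ℝ) : ℂ)))
        - (q.1 a) * (2 * (0 + Complex.I * 1)))
        / (2 * (((s : ℝ) : ℂ) + Complex.I * ((q.2 + 0 : ℝ) : ℂ))) ^ 2
      = -(2 * Complex.I * (q.1 a)) / (denp q) ^ 2 := by
    rw [hd0]; ring
  rw [this] at hdiv
  exact hdiv

lemma ZbarGd {p : (Fin n → ℂ) × ℝ} (hp : p ≠ 0) (a : Fin n) :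
    Zbarop a (Gd a) p = 1 / denm p := by
  unfold Zbarop wdzbar wdt
  rw [Gd_deriv_z hp a 1, Gd_deriv_z hp a Complex.I, Gd_deriv_t hp a]
  set x := (p.1 a).re with hx
  set y := (p.1 a).im with hy
  set s := sfun p.1 with hs
  set t := p.2 with ht
  have hconj : conj (p.1 a) = (x : ℂ) - (y : ℂ) * Complex.I := by
    apply Complex.ext <;> simp [hx, hy]
  have hz : (p.1 a) = (x : ℂ) + (y : ℂ) * Complex.I := by
    apply Complex.ext <;> simp [hx, hy]
  have h1 : ((conj (p.1 a)) * 1).re = x := by simp [hx]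
  have h2 : ((conj (p.1 a)) * Complex.I).re = y := by
    simp [Complex.mul_re, hx, hy]
  have hdm : denm p = 2 * ((s : ℂ) - Complex.I * (t : ℂ)) := rfl
  have hone : ((s : ℂ) - Complex.I * (t : ℂ)) ≠ 0 := by
    intro h
    exact denm_ne hp (by rw [hdm, h, mul_zero])
  rw [h1, h2, hconj, hz, hdm]
  push_cast
  field_simp
  simp only [map_one, Complex.conj_I]
  ring_nf
  simp only [Complex.I_sq, Ipow3, Ipow4, Ipow5, Ipow6, Ipow7, Ipow8]
  ring_nf

lemma ZGb {p : (Fin n → ℂ) × ℝ} (hp : p ≠ 0) (a : Fin n) :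
    Zop a (Gb a) p = 1 / denp p := by
  unfold Zop wdz wdt
  rw [Gb_deriv_z hp a 1, Gb_deriv_z hp a Complex.I, Gb_deriv_t hp a]
  set x := (p.1 a).re with hx
  set y := (p.1 a).im with hy
  set s := sfun p.1 with hs
  set t := p.2 with ht
  have hconj : conj (p.1 a) = (x : ℂ) - (y : ℂ) * Complex.I := by
    apply Complex.ext <;> simp [hx, hy]
  have hz : (p.1 a) = (x : ℂ) + (y : ℂ) * Complex.I := by
    apply Complex.ext <;> simp [hx, hy]
  have h1 : ((conj (p.1 a)) * 1).re = x := by simp [hx]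
  have h2 : ((conj (p.1 a)) * Complex.I).re = y := by
    simp [Complex.mul_re, hx, hy]
  have hdp : denp p = 2 * ((s : ℂ) + Complex.I * (t : ℂ)) := rfl
  have hone : ((s : ℂ) + Complex.I * (t : ℂ)) ≠ 0 := by
    intro h
    exact denp_ne hp (by rw [hdp, h, mul_zero])
  rw [h1, h2, hconj, hz, hdp]
  push_cast
  field_simp
  ring_nf
  simp only [Complex.I_sq, Ipow3, Ipow4, Ipow5, Ipow6, Ipow7, Ipow8]
  ring_nf

lemma Zop_congr {f g : ((Fin n → ℂ) × ℝ) → ℂ} {p : (Fin n → ℂ) × ℝ} (a : Fin n)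
    (h : f =ᶠ[nhds p] g) : Zop a f p = Zop a g p := by
  unfold Zop wdz wdt
  rw [h.fderiv_eq]

lemma Zbarop_congr {f g : ((Fin n → ℂ) × ℝ) → ℂ} {p : (Fin n → ℂ) × ℝ} (a : Fin n)
    (h : f =ᶠ[nhds p] g) : Zbarop a f p = Zbarop a g p := by
  unfold Zbarop wdzbar wdt
  rw [h.fderiv_eq]

end Stmt16Aux


/-- The sublaplacian-type identity for `log ρ` on the Heisenberg group, and the
consequent formula `R = n(n+1)|z|²/(2ρ²)` for the Tanaka–Webster scalar curvature of
`θ = ρ⁻²θ₀`: it is nonnegative and vanishes exactly where `z = 0`. -/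
theorem stmt16 {n : ℕ} (hn : 0 < n) (p : (Fin n → ℂ) × ℝ) (hp : p ≠ 0) :
    ((∑ a, (Zop a (Zbarop a heisU) p + Zbarop a (Zop a heisU) p))
        - 2 * (n : ℂ) * ∑ a, Zop a heisU p * conj (Zop a heisU p)
      = ((n : ℂ) / 2) * ((∑ a, Complex.normSq (p.1 a) : ℝ) : ℂ)
          / ((heisRho p : ℂ)) ^ 4) ∧
    (0 ≤ (n : ℝ) * (n + 1) * (∑ a, Complex.normSq (p.1 a))
        / (2 * (heisRho p) ^ 2)) ∧
    ((n : ℝ) * (n + 1) * (∑ a, Complex.normSq (p.1 a))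
        / (2 * (heisRho p) ^ 2) = 0 ↔ p.1 = 0) := by
  have hφ : 0 < Stmt16Aux.phi p := Stmt16Aux.phi_pos hp
  have hρ : heisRho p = (Stmt16Aux.phi p) ^ ((1:ℝ)/4) := rfl
  have hρpos : 0 < heisRho p := by rw [hρ]; exact Real.rpow_pos_of_pos hφ _
  have hρ4 : (heisRho p) ^ 4 = Stmt16Aux.phi p := by
    rw [hρ, ← Real.rpow_natCast ((Stmt16Aux.phi p) ^ ((1:ℝ)/4)) 4, ← Real.rpow_mul hφ.le]
    norm_num
  have hsum_s : (∑ a, Complex.normSq (p.1 a)) = Stmt16Aux.sfun p.1 := rfl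
  have hmem : {q : (Fin n → ℂ) × ℝ | q ≠ 0} ∈ nhds p := isOpen_ne.mem_nhds hp
  refine ⟨?_, ?_, ?_⟩
  · have h1 : ∀ a : Fin n, Zop a (Zbarop a heisU) p + Zbarop a (Zop a heisU) p
        = 1 / Stmt16Aux.denp p + 1 / Stmt16Aux.denm p := by
      intro a
      have hev1 : (Zbarop a heisU) =ᶠ[nhds p] (Stmt16Aux.Gb a) :=
        Filter.eventuallyEq_of_mem hmem fun q hq => Stmt16Aux.Zbarop_heisU hq a
      have hev2 : (Zop a heisU) =ᶠ[nhds p] (Stmt16Aux.Gd a) :=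
        Filter.eventuallyEq_of_mem hmem fun q hq => Stmt16Aux.Zop_heisU hq a
      rw [Stmt16Aux.Zop_congr a hev1, Stmt16Aux.Zbarop_congr a hev2,
        Stmt16Aux.ZGb hp a, Stmt16Aux.ZbarGd hp a]
    have h2 : ∀ a : Fin n, Zop a heisU p * conj (Zop a heisU p)
        = ((Complex.normSq (p.1 a) : ℝ) : ℂ) / (Stmt16Aux.denm p * Stmt16Aux.denp p) := by
      intro a
      rw [Stmt16Aux.Zop_heisU hp a]
      unfold Stmt16Aux.Gd
      rw [map_div₀, Complex.conj_conj, Stmt16Aux.conj_denm, div_mul_div_comm]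
      congr 1
      rw [mul_comm]
      exact Complex.mul_conj (p.1 a)
    rw [Finset.sum_congr rfl fun a _ => h1 a, Finset.sum_congr rfl fun a _ => h2 a]
    rw [Finset.sum_const, Finset.card_univ, Fintype.card_fin, nsmul_eq_mul]
    rw [← Finset.sum_div]
    have hcast : (∑ a, ((Complex.normSq (p.1 a) : ℝ) : ℂ)) = ((Stmt16Aux.sfun p.1 : ℝ) : ℂ) := by
      rw [Stmt16Aux.sfun]
      norm_cast
    rw [hcast, hsum_s]
    have hrc : ((heisRho p : ℝ) : ℂ) ^ 4 = ((Stmt16Aux.phi p : ℝ) : ℂ) := by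
      rw [← Complex.ofReal_pow, hρ4]
    rw [hrc]
    have hdm := Stmt16Aux.denm_ne hp
    have hdp := Stmt16Aux.denp_ne hp
    set s := Stmt16Aux.sfun p.1 with hsdef
    set t := p.2 with htdef
    have hdme : Stmt16Aux.denm p = 2 * ((s:ℂ) - Complex.I * t) := rfl
    have hdpe : Stmt16Aux.denp p = 2 * ((s:ℂ) + Complex.I * t) := rfl
    have hone : ((s:ℂ) - Complex.I * t) ≠ 0 := fun h => hdm (by rw [hdme, h, mul_zero])
    have htwo : ((s:ℂ) + Complex.I * t) ≠ 0 := fun h => hdp (by rw [hdpe, h, mul_zero])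
    have hphic : ((Stmt16Aux.phi p : ℝ) : ℂ) = (s:ℂ)^2 + (t:ℂ)^2 := by
      unfold Stmt16Aux.phi; push_cast; ring
    have hphine : ((s:ℂ)^2 + (t:ℂ)^2) ≠ 0 := by
      rw [← hphic]; exact Complex.ofReal_ne_zero.mpr hφ.ne'
    rw [hdme, hdpe, hphic]
    field_simp
    ring_nf
    simp only [Complex.I_sq, Stmt16Aux.Ipow3, Stmt16Aux.Ipow4, Stmt16Aux.Ipow5,
      Stmt16Aux.Ipow6, Stmt16Aux.Ipow7, Stmt16Aux.Ipow8]
    ring_nf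
  · apply div_nonneg
    · apply mul_nonneg (by positivity)
      exact Finset.sum_nonneg fun a _ => Complex.normSq_nonneg _
    · positivity
  · have hden : 2 * (heisRho p) ^ 2 ≠ 0 := by positivity
    rw [div_eq_zero_iff]
    constructor
    · rintro (h | h)
      · have hn' : (0:ℝ) < n := by exact_mod_cast hn
        have hnn : ((n:ℝ) * ((n:ℝ) + 1)) ≠ 0 := by positivity
        rcases mul_eq_zero.mp h with h' | h'
        · exact absurd h' hnn
        · exact (Stmt16Aux.sfun_eq_zero_iff p.1).mp (by rw [← hsum_s]; exact h')
      · exact absurd h hden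
    · intro h
      rw [hsum_s, (Stmt16Aux.sfun_eq_zero_iff p.1).mpr h, mul_zero]
      simp
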